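/- Let u(μ) = Σ_{k=0}^∞ ((1/2)_k / k!)³ (64μ)^k, an analytic function on the complex disk |μ| < 1/64. Then u satisfies the Picard–Fuchs differential equation μ²(64μ − 1)u‴(μ) + μ(288μ − 3)u″(μ) + (208μ − 1)u′(μ) + 8u(μ) = 0 for all complex μ with |μ| < 1/64. -/

import Mathlib

/-- Pochhammer symbol `(a)_k = a(a+1)⋯(a+k−1)` over `ℂ`. -/
noncomputable def pochC (a : ℂ) (k : ℕ) : ℂ := ∏ i ∈ Finset.range k, (a + i)

/-- `u(μ) = Σ_{k≥0} ((1/2)_k / k!)³ (64μ)^k`, analytic on `|μ| < 1/64`. -/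
noncomputable def u (μ : ℂ) : ℂ :=
  ∑' k : ℕ, (pochC (1/2) k / (Nat.factorial k : ℂ)) ^ 3 * (64 * μ) ^ k

noncomputable def cc (k : ℕ) : ℂ := (pochC (1/2) k / (Nat.factorial k : ℂ)) ^ 3 * 64 ^ k
noncomputable def aa1 (k : ℕ) : ℂ := ((k:ℂ)+1) * cc (k+1)
noncomputable def aa2 (k : ℕ) : ℂ := ((k:ℂ)+1) * aa1 (k+1)
noncomputable def aa3 (k : ℕ) : ℂ := ((k:ℂ)+1) * aa2 (k+1)

noncomputable def U1 : ℂ → ℂ := fun z => ∑' k : ℕ, aa1 k * z^k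
noncomputable def U2 : ℂ → ℂ := fun z => ∑' k : ℕ, aa2 k * z^k
noncomputable def U3 : ℂ → ℂ := fun z => ∑' k : ℕ, aa3 k * z^k

lemma pochC_norm (k : ℕ) : ‖pochC (1/2) k‖ ≤ (Nat.factorial k : ℝ) := by
  induction k with
  | zero => simp [pochC]
  | succ n ih =>
    rw [pochC, Finset.prod_range_succ, ← pochC]
    rw [Nat.factorial_succ]
    push_cast
    calc ‖pochC (1/2) n * (1/2 + (n:ℂ))‖ = ‖pochC (1/2) n‖ * ‖(1/2 + (n:ℂ))‖ := norm_mul _ _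
    _ ≤ (Nat.factorial n : ℝ) * ((n:ℝ)+1) := by
        apply mul_le_mul ih ?_ (norm_nonneg _) (Nat.cast_nonneg _)
        calc ‖(1/2 + (n:ℂ))‖ ≤ ‖(1/2:ℂ)‖ + ‖(n:ℂ)‖ := norm_add_le _ _
        _ ≤ (n:ℝ) + 1 := by simp; linarith
    _ = ((n:ℝ)+1) * (Nat.factorial n : ℝ) := by ring

lemma cc_norm (k : ℕ) : ‖cc k‖ ≤ 64 ^ k := by
  have hf : (0:ℝ) < (Nat.factorial k : ℝ) := by positivity
  have h1 : ‖pochC (1/2) k / (Nat.factorial k : ℂ)‖ ≤ 1 := by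
    rw [norm_div]
    rw [div_le_one (by simpa using hf)]
    simpa using pochC_norm k
  calc ‖cc k‖ = ‖pochC (1/2) k / (Nat.factorial k : ℂ)‖^3 * ‖(64:ℂ)‖^k := by
        rw [cc, norm_mul, norm_pow, norm_pow]
  _ ≤ 1 * 64^k := by
        apply mul_le_mul (pow_le_one₀ (norm_nonneg _) h1) ?_ (by positivity) zero_le_one
        simp
  _ = 64^k := one_mul _

lemma cc_rec (k : ℕ) : ((k:ℂ)+1)^3 * cc (k+1) = 8*(2*(k:ℂ)+1)^3 * cc k := by
  have hk : ((k:ℂ)+1) ≠ 0 := Nat.cast_add_one_ne_zero k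
  have hf : ((Nat.factorial k : ℂ)) ≠ 0 := Nat.cast_ne_zero.2 (Nat.factorial_ne_zero k)
  rw [cc, cc, pochC, Finset.prod_range_succ, ← pochC, Nat.factorial_succ]
  push_cast
  field_simp
  ring

lemma summable_aux (x : ℝ) (hx : 0 < x) (hx1 : x < 1) (j : ℕ) :
    Summable (fun n : ℕ => ((n:ℝ)+1)^j * x^n) := by
  have h := summable_pow_mul_geometric_of_norm_lt_one (R := ℝ) j
    (by rwa [Real.norm_eq_abs, abs_of_pos hx] : ‖x‖ < 1)
  have h2 : Summable (fun n : ℕ => ((n+1:ℕ):ℝ)^j * x^(n+1)) :=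
    (summable_nat_add_iff 1).2 h
  have h3 := h2.mul_left x⁻¹
  refine h3.congr fun n => ?_
  push_cast
  field_simp
  ring

lemma hasDerivAt_tsum_pow (a : ℕ → ℂ) (C : ℝ) (m : ℕ)
    (ha : ∀ k, ‖a k‖ ≤ C * ((k:ℝ)+1)^m * 64^k)
    (r : ℝ) (h0 : 0 < r) (hr : r < 1/64) (y : ℂ) (hy : y ∈ Metric.ball (0:ℂ) r) :
    HasDerivAt (fun z => ∑' k : ℕ, a k * z^k) (∑' k : ℕ, ((k:ℂ)+1) * a (k+1) * y^k) y := by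
  have hC : 0 ≤ C := le_trans (norm_nonneg (a 0)) (by simpa using ha 0)
  set v : ℕ → ℝ := fun n => (C/r) * (((n:ℝ)+1)^(m+1) * (64*r)^n) with hv_def
  have hx : (0:ℝ) < 64*r := by linarith
  have hx1 : 64*r < 1 := by linarith
  have hv : Summable v := ((summable_aux (64*r) hx hx1 (m+1)).mul_left (C/r))
  have hbound : ∀ (n : ℕ) (z : ℂ), z ∈ Metric.ball (0:ℂ) r →
      ‖a n * ((n:ℂ) * z^(n-1))‖ ≤ v n := by
    intro n z hz
    have hz' : ‖z‖ ≤ r := le_of_lt (by simpa using hz)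
    match n with
    | 0 => simp [hv_def]; positivity
    | (k+1) =>
      have h2 : ‖(((k+1:ℕ)):ℂ)‖ = (k:ℝ)+1 := by
        rw [Complex.norm_natCast]; push_cast; ring
      have ha' : ‖a (k+1)‖ ≤ C * ((k:ℝ)+2)^m * 64^(k+1) := by
        have := ha (k+1); push_cast at this; convert this using 3 <;> ring
      have h1 : ‖a (k+1) * (((k+1:ℕ):ℂ) * z^(k+1-1))‖
          ≤ (C * ((k:ℝ)+2)^m * 64^(k+1)) * (((k:ℝ)+1) * r^k) := by
        rw [norm_mul, norm_mul, norm_pow, h2, Nat.add_sub_cancel]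
        have hb : 0 ≤ C * ((k:ℝ)+2)^m * 64^(k+1) :=
          mul_nonneg (mul_nonneg hC (by positivity)) (by positivity)
        have hzk : ((k:ℝ)+1) * ‖z‖^k ≤ ((k:ℝ)+1) * r^k := by
          gcongr
        exact mul_le_mul ha' hzk (by positivity) hb
      refine h1.trans ?_
      have hvk : v (k+1) = (C * ((k:ℝ)+2)^m * 64^(k+1) * r^k) * ((k:ℝ)+2) := by
        rw [hv_def]
        have h3 : ((k+1:ℕ):ℝ)+1 = (k:ℝ)+2 := by push_cast; ring
        simp only
        rw [h3, pow_succ ((k:ℝ)+2) m, mul_pow, pow_succ]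
        field_simp
        ring
      have hnn : 0 ≤ C * ((k:ℝ)+2)^m * 64^(k+1) * r^k :=
        mul_nonneg (mul_nonneg (mul_nonneg hC (by positivity)) (by positivity)) (by positivity)
      calc C * ((k:ℝ)+2)^m * 64^(k+1) * (((k:ℝ)+1) * r^k)
          = (C * ((k:ℝ)+2)^m * 64^(k+1) * r^k) * ((k:ℝ)+1) := by ring
        _ ≤ (C * ((k:ℝ)+2)^m * 64^(k+1) * r^k) * ((k:ℝ)+2) := by
            apply mul_le_mul_of_nonneg_left (by linarith) hnn
        _ = v (k+1) := hvk.symm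
  have key := hasDerivAt_tsum_of_isPreconnected hv Metric.isOpen_ball
    (convex_ball (0:ℂ) r).isPreconnected
    (g := fun n z => a n * z^n) (g' := fun n z => a n * ((n:ℂ) * z^(n-1)))
    (fun n z _ => (hasDerivAt_pow n z).const_mul (a n))
    hbound (Metric.mem_ball_self h0)
    (by
      apply summable_of_ne_finset_zero (s := {0})
      intro b hb
      simp only [Finset.mem_singleton] at hb
      simp [zero_pow hb])
    hy
  have hs : Summable (fun n => a n * ((n:ℂ) * y^(n-1))) :=
    Summable.of_norm_bounded hv (fun n => hbound n y hy)
  refine key.congr_deriv ?_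
  rw [Summable.tsum_eq_zero_add hs]
  norm_num
  apply tsum_congr
  intro k
  push_cast
  ring

lemma norm_natCast_add_one (k : ℕ) : ‖((k:ℂ)+1)‖ = (k:ℝ)+1 := by
  rw [show ((k:ℂ)+1) = ((k+1:ℕ):ℂ) by push_cast; ring, Complex.norm_natCast]
  push_cast; ring

lemma bound_step (a : ℕ → ℂ) (C : ℝ) (m : ℕ)
    (ha : ∀ k, ‖a k‖ ≤ C * ((k:ℝ)+1)^m * 64^k) :
    ∀ k : ℕ, ‖((k:ℂ)+1) * a (k+1)‖ ≤ (2^m*64*C) * ((k:ℝ)+1)^(m+1) * 64^k := by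
  intro k
  have hC : 0 ≤ C := le_trans (norm_nonneg (a 0)) (by simpa using ha 0)
  rw [norm_mul, norm_natCast_add_one]
  have h := ha (k+1)
  push_cast at h
  have h2 : ((k:ℝ)+1+1)^m ≤ (2*((k:ℝ)+1))^m := by
    apply pow_le_pow_left₀ (by positivity) (by linarith)
  calc ((k:ℝ)+1) * ‖a (k+1)‖ ≤ ((k:ℝ)+1) * (C * ((k:ℝ)+1+1)^m * 64^(k+1)) := by
        apply mul_le_mul_of_nonneg_left h (by positivity)
    _ ≤ ((k:ℝ)+1) * (C * (2*((k:ℝ)+1))^m * 64^(k+1)) := by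
        apply mul_le_mul_of_nonneg_left ?_ (by positivity)
        apply mul_le_mul_of_nonneg_right ?_ (by positivity)
        apply mul_le_mul_of_nonneg_left h2 hC
    _ = (2^m*64*C) * ((k:ℝ)+1)^(m+1) * 64^k := by
        rw [mul_pow, pow_succ ((k:ℝ)+1) m, pow_succ (64:ℝ) k]
        ring

lemma summable_coeff (a : ℕ → ℂ) (C : ℝ) (m : ℕ)
    (ha : ∀ k, ‖a k‖ ≤ C * ((k:ℝ)+1)^m * 64^k) (y : ℂ) (hy : ‖y‖ < 1/64) :
    Summable (fun k : ℕ => a k * y^k) := by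
  rcases eq_or_ne y 0 with h | h
  · subst h
    apply summable_of_ne_finset_zero (s := {0})
    intro b hb
    simp only [Finset.mem_singleton] at hb
    simp [zero_pow hb]
  · have hy0 : 0 < ‖y‖ := norm_pos_iff.2 h
    have hs := (summable_aux (64*‖y‖) (by linarith) (by linarith) m).mul_left C
    apply Summable.of_norm_bounded hs
    intro k
    rw [norm_mul, norm_pow]
    calc ‖a k‖*‖y‖^k ≤ (C*((k:ℝ)+1)^m*64^k)*‖y‖^k := by
          apply mul_le_mul_of_nonneg_right (ha k) (by positivity)
      _ = C*(((k:ℝ)+1)^m*(64*‖y‖)^k) := by rw [mul_pow]; ring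

lemma hasSum_congr' {f g : ℕ → ℂ} {a : ℂ} (h : HasSum f a) (he : ∀ k, g k = f k) :
    HasSum g a := (funext he : g = f) ▸ h

lemma hasSum_shift (f : ℕ → ℂ) (j : ℕ) (a : ℂ) (h : HasSum (fun k => f (k+j)) a)
    (h0 : ∀ i < j, f i = 0) : HasSum f a := by
  have h2 := (hasSum_nat_add_iff (f := f) j).1 h
  rwa [Finset.sum_eq_zero (fun i hi => h0 i (Finset.mem_range.1 hi)), add_zero] at h2

lemma hb0 : ∀ k : ℕ, ‖cc k‖ ≤ 1 * ((k:ℝ)+1)^0 * 64^k := fun k => by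
  simpa using cc_norm k

lemma hb1 : ∀ k : ℕ, ‖aa1 k‖ ≤ (2^0*64*1) * ((k:ℝ)+1)^(0+1) * 64^k :=
  fun k => bound_step cc 1 0 hb0 k

lemma hb2 : ∀ k : ℕ, ‖aa2 k‖ ≤ (2^(0+1)*64*(2^0*64*1)) * ((k:ℝ)+1)^(0+1+1) * 64^k :=
  fun k => bound_step aa1 _ _ hb1 k

lemma hb3 : ∀ k : ℕ, ‖aa3 k‖ ≤ (2^(0+1+1)*64*(2^(0+1)*64*(2^0*64*1))) * ((k:ℝ)+1)^(0+1+1+1) * 64^k :=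
  fun k => bound_step aa2 _ _ hb2 k

theorem stmt18 (μ : ℂ) (hμ : ‖μ‖ < 1/64) :
    μ ^ 2 * (64 * μ - 1) * iteratedDeriv 3 u μ +
      μ * (288 * μ - 3) * iteratedDeriv 2 u μ +
      (208 * μ - 1) * deriv u μ + 8 * u μ = 0 := by
  have hμn : ‖μ‖ < 1/64 := hμ
  set r : ℝ := (‖μ‖ + 1/64)/2 with hr_def
  have hμ0 : 0 ≤ ‖μ‖ := norm_nonneg μ
  have hr0 : 0 < r := by rw [hr_def]; linarith
  have hr64 : r < 1/64 := by rw [hr_def]; linarith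
  have hμr : μ ∈ Metric.ball (0:ℂ) r := by
    rw [Metric.mem_ball, dist_zero_right, hr_def]; linarith
  have hu : u = fun z => ∑' k : ℕ, cc k * z^k := by
    funext z
    apply tsum_congr
    intro k
    rw [cc, mul_pow]
    ring
  -- derivative ladder
  have hD0 : ∀ y ∈ Metric.ball (0:ℂ) r, HasDerivAt u (U1 y) y := fun y hy => by
    rw [hu]
    exact hasDerivAt_tsum_pow cc 1 0 hb0 r hr0 hr64 y hy
  have hD1 : ∀ y ∈ Metric.ball (0:ℂ) r, HasDerivAt U1 (U2 y) y := fun y hy =>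
    hasDerivAt_tsum_pow aa1 _ _ hb1 r hr0 hr64 y hy
  have hD2 : ∀ y ∈ Metric.ball (0:ℂ) r, HasDerivAt U2 (U3 y) y := fun y hy =>
    hasDerivAt_tsum_pow aa2 _ _ hb2 r hr0 hr64 y hy
  have hd1 : ∀ y ∈ Metric.ball (0:ℂ) r, deriv u y = U1 y := fun y hy => (hD0 y hy).deriv
  have hI2 : ∀ y ∈ Metric.ball (0:ℂ) r, iteratedDeriv 2 u y = U2 y := fun y hy => by
    rw [iteratedDeriv_succ, iteratedDeriv_one]
    have heq : deriv u =ᶠ[nhds y] U1 :=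
      Filter.eventuallyEq_of_mem (Metric.isOpen_ball.mem_nhds hy) hd1
    rw [heq.deriv_eq, (hD1 y hy).deriv]
  have hI3 : iteratedDeriv 3 u μ = U3 μ := by
    rw [iteratedDeriv_succ]
    have heq : iteratedDeriv 2 u =ᶠ[nhds μ] U2 :=
      Filter.eventuallyEq_of_mem (Metric.isOpen_ball.mem_nhds hμr) hI2
    rw [heq.deriv_eq, (hD2 μ hμr).deriv]
  -- HasSum facts
  have S0 : HasSum (fun k : ℕ => cc k * μ^k) (u μ) := by
    rw [hu]
    exact (summable_coeff cc _ _ hb0 μ hμn).hasSum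
  have S1 : HasSum (fun k : ℕ => aa1 k * μ^k) (U1 μ) :=
    (summable_coeff aa1 _ _ hb1 μ hμn).hasSum
  have S2 : HasSum (fun k : ℕ => aa2 k * μ^k) (U2 μ) :=
    (summable_coeff aa2 _ _ hb2 μ hμn).hasSum
  have S3 : HasSum (fun k : ℕ => aa3 k * μ^k) (U3 μ) :=
    (summable_coeff aa3 _ _ hb3 μ hμn).hasSum
  -- pieces
  have PA : HasSum (fun k : ℕ => 64*(k:ℂ)*((k:ℂ)-1)*((k:ℂ)-2)*cc k*μ^k) (64*μ^3*U3 μ) := by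
    apply hasSum_shift _ 3
    · apply hasSum_congr' (S3.mul_left (64*μ^3))
      intro k
      simp only [aa3, aa2, aa1]
      push_cast
      ring
    · intro i hi
      interval_cases i <;> norm_num
  have PB : HasSum (fun k : ℕ => ((k:ℂ)-1)*(k:ℂ)*((k:ℂ)+1)*cc (k+1)*μ^k) (μ^2*U3 μ) := by
    apply hasSum_shift _ 2
    · apply hasSum_congr' (S3.mul_left (μ^2))
      intro k
      simp only [aa3, aa2, aa1]
      push_cast
      ring
    · intro i hi
      interval_cases i <;> norm_num
  have PC : HasSum (fun k : ℕ => 288*(k:ℂ)*((k:ℂ)-1)*cc k*μ^k) (288*μ^2*U2 μ) := by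
    apply hasSum_shift _ 2
    · apply hasSum_congr' (S2.mul_left (288*μ^2))
      intro k
      simp only [aa2, aa1]
      push_cast
      ring
    · intro i hi
      interval_cases i <;> norm_num
  have PD : HasSum (fun k : ℕ => 3*(k:ℂ)*((k:ℂ)+1)*cc (k+1)*μ^k) (3*μ*U2 μ) := by
    apply hasSum_shift _ 1
    · apply hasSum_congr' (S2.mul_left (3*μ))
      intro k
      simp only [aa2, aa1]
      push_cast
      ring
    · intro i hi
      interval_cases i <;> norm_num
  have PE : HasSum (fun k : ℕ => 208*(k:ℂ)*cc k*μ^k) (208*μ*U1 μ) := by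
    apply hasSum_shift _ 1
    · apply hasSum_congr' (S1.mul_left (208*μ))
      intro k
      simp only [aa1]
      push_cast
      ring
    · intro i hi
      interval_cases i <;> norm_num
  have PF : HasSum (fun k : ℕ => ((k:ℂ)+1)*cc (k+1)*μ^k) (U1 μ) := by
    apply hasSum_congr' S1
    intro k
    simp only [aa1]
  have PG : HasSum (fun k : ℕ => 8*cc k*μ^k) (8 * u μ) := by
    apply hasSum_congr' (S0.mul_left 8)
    intro k
    ring
  have TOT := (((((PA.sub PB).add PC).sub PD).add PE).sub PF).add PG
  have hzero : ∀ k : ℕ,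
      64*(k:ℂ)*((k:ℂ)-1)*((k:ℂ)-2)*cc k*μ^k - ((k:ℂ)-1)*(k:ℂ)*((k:ℂ)+1)*cc (k+1)*μ^k
        + 288*(k:ℂ)*((k:ℂ)-1)*cc k*μ^k - 3*(k:ℂ)*((k:ℂ)+1)*cc (k+1)*μ^k
        + 208*(k:ℂ)*cc k*μ^k - ((k:ℂ)+1)*cc (k+1)*μ^k + 8*cc k*μ^k = 0 := by
    intro k
    linear_combination (-(μ^k)) * cc_rec k
  have hz : HasSum (fun _ : ℕ => (0:ℂ))
      (64*μ^3*U3 μ - μ^2*U3 μ + 288*μ^2*U2 μ - 3*μ*U2 μ + 208*μ*U1 μ - U1 μ + 8 * u μ) := by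
    apply hasSum_congr' TOT
    intro k
    exact (hzero k).symm
  have hV : 64*μ^3*U3 μ - μ^2*U3 μ + 288*μ^2*U2 μ - 3*μ*U2 μ + 208*μ*U1 μ - U1 μ + 8 * u μ = 0 :=
    hz.unique hasSum_zero
  rw [hI3, hI2 μ hμr, hd1 μ hμr]
  linear_combination hV
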